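/- For every finite simple graph G, G does not contain the chair as a topological minor if and only if every connected component of G with at least five vertices is a path, a cycle, or a star. -/

import Mathlib

open SimpleGraph

/-- The internal vertices of a walk: its support minus the two endpoints. -/
def SimpleGraph.Walk.internalSupport {V : Type*} {G : SimpleGraph V} {u v : V}
    (p : G.Walk u v) : List V :=
  p.support.tail.dropLast

/-- `G` contains `H` as a topological minor: there is an injective map `φ` on vertices and,
for each edge `{x,y}` of `H`, a path in `G` from `φ x` to `φ y` (one path per edge, encoded
symmetrically on ordered adjacent pairs), such that for any two distinct edges of `H` no
internal vertex of the path of one edge lies on the path of the other edge. -/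
def SimpleGraph.IsTopMinor {V W : Type*} (H : SimpleGraph V) (G : SimpleGraph W) : Prop :=
  ∃ (φ : V → W) (σ : ∀ ⦃x y : V⦄, H.Adj x y → G.Walk (φ x) (φ y)),
    Function.Injective φ ∧
    (∀ ⦃x y⦄ (h : H.Adj x y), (σ h).IsPath) ∧
    (∀ ⦃x y⦄ (h : H.Adj x y), σ h.symm = (σ h).reverse) ∧
    (∀ ⦃x y x' y'⦄ (h : H.Adj x y) (h' : H.Adj x' y'),
      s(x, y) ≠ s(x', y') →
      ∀ w ∈ (σ h).internalSupport, w ∉ (σ h').support)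

/-- The chair: a path `0 - 1 - 2 - 3` together with a pendant vertex `4` adjacent to the
second vertex `1` of the path. -/
def chairGraph : SimpleGraph (Fin 5) :=
  SimpleGraph.fromRel (fun i j =>
    (i = 0 ∧ j = 1) ∨ (i = 1 ∧ j = 2) ∨ (i = 2 ∧ j = 3) ∨ (i = 1 ∧ j = 4))

/-- A graph is a star if some vertex (the center) is adjacent to all other vertices and
there are no other edges. -/
def SimpleGraph.IsStarGraph {V : Type*} (G : SimpleGraph V) : Prop :=
  ∃ c : V, (∀ v, v ≠ c → G.Adj c v) ∧ ∀ u v, G.Adj u v → u = c ∨ v = c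

/-- A graph is a cycle if it is connected and `2`-regular. -/
def SimpleGraph.IsCycleGraph {V : Type*} (G : SimpleGraph V) : Prop :=
  G.Connected ∧ ∀ v, Nat.card (G.neighborSet v) = 2

/-- A graph is a path if it is a tree with maximum degree at most `2`. -/
def SimpleGraph.IsPathGraph {V : Type*} (G : SimpleGraph V) : Prop :=
  G.IsTree ∧ ∀ v, Nat.card (G.neighborSet v) ≤ 2

section helpers
variable {V : Type*} {G : SimpleGraph V} {u v w : V}

lemma list_mem_dropLast_iff {α : Type*} :
    ∀ {l : List α} (_ : l.Nodup) (hne : l ≠ []) {x : α},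
      x ∈ l.dropLast ↔ x ∈ l ∧ x ≠ l.getLast hne
  | [], _, hne, _ => absurd rfl hne
  | [a], _, _, x => by simp
  | a :: b :: t, hl, _, x => by
    have ih := list_mem_dropLast_iff (l := b :: t) (x := x) hl.of_cons (by simp)
    have halast : a ≠ (b :: t).getLast (by simp) := by
      intro he
      exact (List.nodup_cons.mp hl).1 (he ▸ List.getLast_mem (by simp))
    rw [List.dropLast_cons₂, List.mem_cons, ih, List.getLast_cons (by simp : (b:: t) ≠ [])]
    simp only [List.mem_cons]
    constructor
    · rintro (rfl | ⟨hx, hxL⟩)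
      · exact ⟨Or.inl rfl, halast⟩
      · exact ⟨Or.inr hx, hxL⟩
    · rintro ⟨rfl | hx, hxL⟩
      · exact Or.inl rfl
      · exact Or.inr ⟨hx, hxL⟩

lemma SimpleGraph.Walk.mem_support_of_mem_internalSupport {p : G.Walk u v}
    (h : w ∈ p.internalSupport) : w ∈ p.support :=
  List.mem_of_mem_tail (List.mem_of_mem_dropLast h)

lemma SimpleGraph.Walk.mem_internalSupport_iff {p : G.Walk u v} (hp : p.IsPath) :
    w ∈ p.internalSupport ↔ w ∈ p.support ∧ w ≠ u ∧ w ≠ v := by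
  have hnd : p.support.Nodup := hp.support_nodup
  by_cases htne : p.support.tail = []
  · have hs : p.support = [u] := by rw [p.support_eq_cons, htne]
    have huv : v = u := by
      have := p.end_mem_support; rw [hs] at this; simpa using this
    simp [Walk.internalSupport, htne, hs, huv]
  · have hndt : p.support.tail.Nodup := by
      rw [p.support_eq_cons] at hnd; exact hnd.of_cons
    have hlast : p.support.tail.getLast htne = v := by
      rw [List.getLast_tail]; exact p.getLast_support
    have hu_not : u ∉ p.support.tail := by
      rw [p.support_eq_cons] at hnd
      exact (List.nodup_cons.mp hnd).1
    rw [Walk.internalSupport, list_mem_dropLast_iff hndt htne, hlast]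
    constructor
    · rintro ⟨hx, hxv⟩
      exact ⟨List.mem_of_mem_tail hx, fun he => hu_not (he ▸ hx), hxv⟩
    · rintro ⟨hx, hxu, hxv⟩
      refine ⟨?_, hxv⟩
      rw [p.support_eq_cons, List.mem_cons] at hx
      rcases hx with hx | hx
      · exact absurd hx hxu
      · exact hx

end helpers


def HasChair {V : Type*} (G : SimpleGraph V) : Prop :=
  ∃ v0 v1 v2 v3 v4 : V, v0 ≠ v2 ∧ v0 ≠ v4 ∧ v2 ≠ v4 ∧ v3 ≠ v0 ∧ v3 ≠ v1 ∧ v3 ≠ v4 ∧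
    G.Adj v1 v0 ∧ G.Adj v1 v2 ∧ G.Adj v2 v3 ∧ G.Adj v1 v4

instance : DecidableRel chairGraph.Adj := fun i j => by
  rw [chairGraph, SimpleGraph.fromRel_adj]; infer_instance

lemma chair_adj_iff {x y : Fin 5} : chairGraph.Adj x y ↔
    (x = 0 ∧ y = 1) ∨ (x = 1 ∧ y = 2) ∨ (x = 2 ∧ y = 3) ∨ (x = 1 ∧ y = 4) ∨
    (y = 0 ∧ x = 1) ∨ (y = 1 ∧ x = 2) ∨ (y = 2 ∧ x = 3) ∨ (y = 1 ∧ x = 4) := by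
  revert x y; decide

lemma topMinor_of_hasChair {V : Type*} {G : SimpleGraph V} (h : HasChair G) :
    chairGraph.IsTopMinor G := by
  obtain ⟨v0, v1, v2, v3, v4, h02, h04, h24, h30, h31, h34, a0, a2, a23, a4⟩ := h
  set φ : Fin 5 → V := ![v0, v1, v2, v3, v4] with hφ
  have adj : ∀ ⦃x y : Fin 5⦄, chairGraph.Adj x y → G.Adj (φ x) (φ y) := by
    intro x y hxy
    rw [chair_adj_iff] at hxy
    rcases hxy with ⟨rfl, rfl⟩|⟨rfl, rfl⟩|⟨rfl, rfl⟩|⟨rfl, rfl⟩|⟨rfl, rfl⟩|⟨rfl, rfl⟩|⟨rfl, rfl⟩|⟨rfl, rfl⟩ <;>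
      simp only [hφ, Matrix.cons_val_zero, Matrix.cons_val_one, Matrix.head_cons,
        Matrix.cons_val_two, Matrix.tail_cons, Matrix.cons_val_three, Matrix.cons_val_four] <;>
      first
        | exact a0.symm | exact a0 | exact a2 | exact a2.symm | exact a23 | exact a23.symm
        | exact a4 | exact a4.symm
  refine ⟨φ, fun x y hxy => SimpleGraph.Walk.cons (adj hxy) SimpleGraph.Walk.nil, ?_, ?_, ?_, ?_⟩
  · have h10 : v1 ≠ v0 := a0.ne
    have h12 : v1 ≠ v2 := a2.ne
    have h23' : v2 ≠ v3 := a23.ne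
    have h14 : v1 ≠ v4 := a4.ne
    intro a b hab
    fin_cases a <;> fin_cases b <;>
      simp_all [hφ, Matrix.cons_val_zero, Matrix.cons_val_one, Matrix.head_cons] <;>
      first
        | rfl
        | (exfalso; first
            | exact h02 hab | exact h02 hab.symm | exact h04 hab | exact h04 hab.symm
            | exact h24 hab | exact h24 hab.symm | exact h30 hab | exact h30 hab.symm
            | exact h31 hab | exact h31 hab.symm | exact h34 hab | exact h34 hab.symm
            | exact h10 hab | exact h10 hab.symm | exact h12 hab | exact h12 hab.symm
            | exact h23' hab | exact h23' hab.symm | exact h14 hab | exact h14 hab.symm)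
  · intro x y hxy
    simp [SimpleGraph.Walk.isPath_def, (adj hxy).ne]
  · intro x y hxy
    simp [SimpleGraph.Walk.reverse_cons]
  · intro x y x' y' h h' hne w hw
    simp [SimpleGraph.Walk.internalSupport] at hw


lemma hasChair_of_topMinor {V : Type*} {G : SimpleGraph V}
    (h : chairGraph.IsTopMinor G) : HasChair G := by
  classical
  obtain ⟨φ, σ, hinj, hpath, -, hdisj⟩ := h
  have hφ : ∀ i j : Fin 5, i ≠ j → φ i ≠ φ j := fun i j hij e => hij (hinj e)
  have h10 : chairGraph.Adj 1 0 := by decide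
  have h12 : chairGraph.Adj 1 2 := by decide
  have h14 : chairGraph.Adj 1 4 := by decide
  have h23 : chairGraph.Adj 2 3 := by decide
  have key : ∀ ⦃x y x' y' : Fin 5⦄ (h : chairGraph.Adj x y) (h' : chairGraph.Adj x' y'),
      s(x, y) ≠ s(x', y') → ∀ w, w ∈ (σ h).support → w ∈ (σ h').support →
      (w = φ x ∨ w = φ y) ∧ (w = φ x' ∨ w = φ y') := by
    intro x y x' y' h h' hne w hw hw'
    constructor
    · by_contra hc
      push_neg at hc
      exact hdisj h h' hne w
        (((σ h).mem_internalSupport_iff (hpath h)).mpr ⟨hw, hc.1, hc.2⟩) hw'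
    · by_contra hc
      push_neg at hc
      exact hdisj h' h (Ne.symm hne) w
        (((σ h').mem_internalSupport_iff (hpath h')).mpr ⟨hw', hc.1, hc.2⟩) hw
  have second : ∀ ⦃x y : Fin 5⦄ (h : chairGraph.Adj x y),
      ∃ n, G.Adj (φ x) n ∧ n ∈ (σ h).support := by
    intro x y h
    obtain ⟨n, ha, q, hq⟩ := SimpleGraph.Walk.exists_eq_cons_of_ne (hφ x y h.ne) (σ h)
    exact ⟨n, ha, by rw [hq]; simp⟩
  obtain ⟨b0, ab0, mb0⟩ := second h10
  obtain ⟨b4, ab4, mb4⟩ := second h14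
  -- b0 ≠ b4
  have hb04 : b0 ≠ b4 := by
    intro he
    have := key h10 h14 (by decide) b0 mb0 (he ▸ mb4)
    rcases this with ⟨h1 | h1, h2 | h2⟩
    · exact ab0.ne' h1
    · exact ab0.ne' h1
    · exact ab0.ne' h2
    · exact hφ 0 4 (by decide) (h1 ▸ h2)
  -- decompose σ h12
  obtain ⟨a, ha, q, hq⟩ := SimpleGraph.Walk.exists_eq_cons_of_ne (hφ 1 2 (by decide)) (σ h12)
  -- b0, b4 vs supports of σ h12 lemma
  have hb0_12 : ∀ w, w ∈ (σ h12).support → w ≠ φ 1 → w ≠ b0 := by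
    intro w hw hwφ1 he
    have := key h12 h10 (by decide) w hw (he ▸ mb0)
    rcases this with ⟨h1 | h1, h2 | h2⟩
    · exact hwφ1 h1
    · exact hwφ1 h1
    · exact hwφ1 h2
    · exact hφ 2 0 (by decide) (h1 ▸ h2 ▸ rfl : φ 2 = φ 0)
  have hb4_12 : ∀ w, w ∈ (σ h12).support → w ≠ φ 1 → w ≠ b4 := by
    intro w hw hwφ1 he
    have := key h12 h14 (by decide) w hw (he ▸ mb4)
    rcases this with ⟨h1 | h1, h2 | h2⟩
    · exact hwφ1 h1
    · exact hwφ1 h1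
    · exact hwφ1 h2
    · exact hφ 2 4 (by decide) (h1 ▸ h2 ▸ rfl : φ 2 = φ 4)
  cases q with
  | nil =>
    -- σ h12 = cons ha nil, a = φ 2
    obtain ⟨b3, ab3, mb3⟩ := second h23
    have hb3φ1 : b3 ≠ φ 1 := by
      intro he
      have hm12 : b3 ∈ (σ h12).support := by
        rw [he]; exact SimpleGraph.Walk.start_mem_support _
      have := key h23 h12 (by decide) b3 mb3 hm12
      rcases this.1 with h1 | h1
      · exact hφ 2 1 (by decide) (h1 ▸ he ▸ rfl : φ 2 = φ 1)
      · exact hφ 3 1 (by decide) (h1 ▸ he ▸ rfl : φ 3 = φ 1)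
    have hb3b0 : b3 ≠ b0 := by
      intro he
      have := key h23 h10 (by decide) b3 mb3 (he ▸ mb0)
      rcases this with ⟨h1 | h1, h2 | h2⟩
      · exact hφ 2 1 (by decide) (h1 ▸ h2 ▸ rfl : φ 2 = φ 1)
      · exact hφ 2 0 (by decide) (h1 ▸ h2 ▸ rfl : φ 2 = φ 0)
      · exact hφ 3 1 (by decide) (h1 ▸ h2 ▸ rfl : φ 3 = φ 1)
      · exact hφ 3 0 (by decide) (h1 ▸ h2 ▸ rfl : φ 3 = φ 0)
    have hb3b4 : b3 ≠ b4 := by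
      intro he
      have := key h23 h14 (by decide) b3 mb3 (he ▸ mb4)
      rcases this with ⟨h1 | h1, h2 | h2⟩
      · exact hφ 2 1 (by decide) (h1 ▸ h2 ▸ rfl : φ 2 = φ 1)
      · exact hφ 2 4 (by decide) (h1 ▸ h2 ▸ rfl : φ 2 = φ 4)
      · exact hφ 3 1 (by decide) (h1 ▸ h2 ▸ rfl : φ 3 = φ 1)
      · exact hφ 3 4 (by decide) (h1 ▸ h2 ▸ rfl : φ 3 = φ 4)
    have hb0φ2 : b0 ≠ φ 2 := by
      intro he
      exact hb0_12 (φ 2) (SimpleGraph.Walk.end_mem_support _) (hφ 2 1 (by decide)) (he ▸ rfl)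
    have hb4φ2 : b4 ≠ φ 2 := by
      intro he
      exact hb4_12 (φ 2) (SimpleGraph.Walk.end_mem_support _) (hφ 2 1 (by decide)) (he ▸ rfl)
    exact ⟨b0, φ 1, φ 2, b3, b4, hb0φ2, hb04, fun e => hb4φ2 e.symm,
      hb3b0, hb3φ1, hb3b4, ab0, ha, ab3, ab4⟩
  | cons ha' q' =>
    -- σ h12 = cons ha (cons ha' q'), a' := next vertex
    rename_i a'
    have hp12 := hpath h12
    rw [hq] at hp12
    rw [SimpleGraph.Walk.cons_isPath_iff] at hp12
    obtain ⟨hp', hφ1not⟩ := hp12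
    rw [SimpleGraph.Walk.cons_isPath_iff] at hp'
    obtain ⟨hq', hanot⟩ := hp'
    have haφ2 : a ≠ φ 2 := fun he => hanot (he ▸ SimpleGraph.Walk.end_mem_support q')
    have ha'φ1 : a' ≠ φ 1 := by
      intro he
      apply hφ1not
      rw [SimpleGraph.Walk.support_cons]
      exact List.mem_cons_of_mem _ (he ▸ SimpleGraph.Walk.start_mem_support q')
    have hma : a ∈ (σ h12).support := by rw [hq]; simp
    have hma' : a' ∈ (σ h12).support := by
      rw [hq]
      rw [SimpleGraph.Walk.support_cons, SimpleGraph.Walk.support_cons]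
      exact List.mem_cons_of_mem _ (List.mem_cons_of_mem _ (SimpleGraph.Walk.start_mem_support q'))
    have ha'_b0 : a' ≠ b0 := hb0_12 a' hma' ha'φ1
    have ha'_b4 : a' ≠ b4 := hb4_12 a' hma' ha'φ1
    -- a is internal of σ h12
    have hain : a ∈ (σ h12).internalSupport :=
      ((σ h12).mem_internalSupport_iff (hpath h12)).mpr ⟨hma, ha.ne', haφ2⟩
    have hab0 : a ≠ b0 := fun he => hdisj h12 h10 (by decide) a hain (he ▸ mb0)
    have hab4 : a ≠ b4 := fun he => hdisj h12 h14 (by decide) a hain (he ▸ mb4)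
    exact ⟨b0, φ 1, a, a', b4, fun e => hab0 e.symm, hb04, hab4,
      ha'_b0, ha'φ1, ha'_b4, ab0, ha, ha', ab4⟩


section classification
variable {V : Type*} {H : SimpleGraph V}

lemma closed_eq_univ (hc : H.Connected) {S : Set V} {v : V} (hv : v ∈ S)
    (hcl : ∀ a ∈ S, ∀ b, H.Adj a b → b ∈ S) : ∀ w, w ∈ S := by
  have main : ∀ {a b : V} (_ : H.Walk a b), a ∈ S → b ∈ S := by
    intro a b p
    induction p with
    | nil => exact id
    | cons h q ih => intro ha; exact ih (hcl _ ha _ h)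
  intro w
  obtain ⟨p⟩ := hc.preconnected v w
  exact main p hv

lemma cycle_two_neighbors {w : V} {q : H.Walk w w} (hq : q.IsCycle) :
    ∃ x y, x ≠ y ∧ H.Adj w x ∧ H.Adj w y ∧ x ∈ q.support ∧ y ∈ q.support := by
  cases q with
  | nil => exact absurd rfl hq.ne_nil
  | cons ha p =>
    rename_i x
    have hcond := (SimpleGraph.Walk.cons_isCycle_iff p ha).mp hq
    have hwx : w ≠ x := ha.ne
    obtain ⟨y, hy, r, hr⟩ := SimpleGraph.Walk.exists_eq_cons_of_ne hwx p.reverse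
    have hyedge : s(w, y) ∈ p.edges := by
      have h1 : s(w, y) ∈ p.reverse.edges := by rw [hr]; simp
      rwa [SimpleGraph.Walk.edges_reverse, List.mem_reverse] at h1
    have hyx : y ≠ x := by
      rintro rfl
      exact hcond.2 hyedge
    have hys : y ∈ p.support := by
      have h2 : y ∈ p.reverse.support := by
        rw [hr, SimpleGraph.Walk.support_cons]
        exact List.mem_cons_of_mem _ (SimpleGraph.Walk.start_mem_support r)
      rwa [SimpleGraph.Walk.support_reverse, List.mem_reverse] at h2
    refine ⟨x, y, hyx.symm, ha, hy, ?_, ?_⟩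
    · rw [SimpleGraph.Walk.support_cons]
      exact List.mem_cons_of_mem _ (SimpleGraph.Walk.start_mem_support p)
    · rw [SimpleGraph.Walk.support_cons]
      exact List.mem_cons_of_mem _ hys

lemma classification [Finite V] (hc : H.Connected) (hn : 5 ≤ Nat.card V)
    (hch : ¬ HasChair H) :
    H.IsPathGraph ∨ H.IsCycleGraph ∨ H.IsStarGraph := by
  classical
  by_cases hdeg : ∀ v, Nat.card (H.neighborSet v) ≤ 2
  · -- path or cycle
    by_cases hac : H.IsAcyclic
    · exact Or.inl ⟨⟨hc, hac⟩, hdeg⟩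
    · refine Or.inr (Or.inl ?_)
      obtain ⟨v, c, hcyc⟩ : ∃ (v : V) (c : H.Walk v v), c.IsCycle := by
        by_contra hno
        push_neg at hno
        exact hac fun v c => hno v c
      have hNS : ∀ w ∈ c.support, (H.neighborSet w).ncard = 2 ∧
          ∀ z ∈ H.neighborSet w, z ∈ c.support := by
        intro w hw
        have hq := hcyc.rotate hw
        obtain ⟨x, y, hxy, hax, hay, hxs, hys⟩ := cycle_two_neighbors hq
        have hrot : ∀ z, z ∈ (c.rotate w hw).support → z ∈ c.support := by
          intro z hz
          rw [SimpleGraph.Walk.support_eq_cons, List.mem_cons] at hz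
          rcases hz with rfl | hz
          · exact hw
          · exact List.mem_of_mem_tail ((SimpleGraph.Walk.support_rotate c w hw).mem_iff.mp hz)
        have hxs' : x ∈ c.support := hrot x hxs
        have hys' : y ∈ c.support := hrot y hys
        have hsub : ({x, y} : Set V) ⊆ H.neighborSet w := by
          rintro z (rfl | rfl)
          · exact hax
          · exact hay
        have h2 : ({x, y} : Set V).ncard = 2 := Set.ncard_pair hxy
        have hle : (H.neighborSet w).ncard ≤ ({x, y} : Set V).ncard := by
          rw [h2, ← Nat.card_coe_set_eq]
          exact hdeg w
        have heq : ({x, y} : Set V) = H.neighborSet w :=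
          Set.eq_of_subset_of_ncard_le hsub hle (Set.toFinite _)
        constructor
        · rw [← heq, h2]
        · intro z hz
          rw [← heq] at hz
          rcases hz with rfl | rfl
          · exact hxs'
          · exact hys'
      have hall : ∀ w, w ∈ {z | z ∈ c.support} := by
        refine closed_eq_univ hc (c.start_mem_support) ?_
        intro a ha b hab
        exact (hNS a ha).2 b hab
      refine ⟨hc, fun w => ?_⟩
      rw [Nat.card_coe_set_eq]
      exact (hNS w (hall w)).1
  · -- star
    push_neg at hdeg
    obtain ⟨v, hv⟩ := hdeg
    rw [Nat.card_coe_set_eq] at hv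
    set N := H.neighborSet v with hN
    have pick1 : ∀ r : V, ∃ p q, p ∈ N ∧ q ∈ N ∧ p ≠ q ∧ p ≠ r ∧ q ≠ r := by
      intro r
      have h1 : 1 < (N \ {r}).ncard := by
        have := Set.pred_ncard_le_ncard_diff_singleton N r
        omega
      obtain ⟨p, q, hp, hq, hpq⟩ := (Set.one_lt_ncard_iff (Set.toFinite _)).mp h1
      simp only [Set.mem_diff, Set.mem_singleton_iff] at hp hq
      exact ⟨p, q, hp.1, hq.1, hpq, hp.2, hq.2⟩
    have haux : ∀ r, H.Adj v r → ∀ s, H.Adj r s → s = v ∨ H.Adj v s := by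
      intro r hr s hs
      by_contra hcon
      push_neg at hcon
      obtain ⟨hsv, hvs⟩ := hcon
      obtain ⟨p, q, hpN, hqN, hpq, hpr, hqr⟩ := pick1 r
      refine hch ⟨p, v, r, s, q, hpr, hpq, fun e => hqr e.symm, ?_, hsv, ?_, hpN, hr, hs, hqN⟩
      · rintro rfl; exact hvs hpN
      · rintro rfl; exact hvs hqN
    have hall : ∀ w, w ∈ insert v N := by
      refine closed_eq_univ hc (Set.mem_insert v N) ?_
      rintro a (rfl | haN) b hab
      · exact Set.mem_insert_of_mem _ hab
      · rcases haux a haN b hab with rfl | h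
        · exact Set.mem_insert _ _
        · exact Set.mem_insert_of_mem _ h
    have hadj_all : ∀ u, u ≠ v → H.Adj v u := by
      intro u hu
      rcases hall u with rfl | h
      · exact absurd rfl hu
      · exact h
    have hNeq : N = {v}ᶜ := by
      ext z
      simp only [Set.mem_compl_iff, Set.mem_singleton_iff]
      constructor
      · intro hz
        rintro rfl
        exact H.irrefl hz
      · intro hz
        exact hadj_all z hz
    have hN4 : 4 ≤ N.ncard := by
      rw [hNeq, Set.compl_eq_univ_diff]
      have h1 := Set.pred_ncard_le_ncard_diff_singleton (Set.univ : Set V) v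
      rw [Set.ncard_univ] at h1
      omega
    have pick2 : ∀ r s : V, ∃ p q, p ∈ N ∧ q ∈ N ∧ p ≠ q ∧ p ≠ r ∧ q ≠ r ∧ p ≠ s ∧ q ≠ s := by
      intro r s
      have h1 : 1 < ((N \ {r}) \ {s}).ncard := by
        have h2 := Set.pred_ncard_le_ncard_diff_singleton N r
        have h3 := Set.pred_ncard_le_ncard_diff_singleton (N \ {r}) s
        omega
      obtain ⟨p, q, hp, hq, hpq⟩ := (Set.one_lt_ncard_iff (Set.toFinite _)).mp h1
      simp only [Set.mem_diff, Set.mem_singleton_iff] at hp hq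
      exact ⟨p, q, hp.1.1, hq.1.1, hpq, hp.1.2, hq.1.2, hp.2, hq.2⟩
    refine Or.inr (Or.inr ⟨v, hadj_all, ?_⟩)
    intro r s hrs
    by_contra hcon
    push_neg at hcon
    obtain ⟨hrv, hsv⟩ := hcon
    obtain ⟨p, q, hpN, hqN, hpq, hpr, hqr, hps, hqs⟩ := pick2 r s
    exact hch ⟨p, v, r, s, q, hpr, hpq, fun e => hqr e.symm, fun e => hps e.symm, hsv, fun e => hqs e.symm,
      hpN, hadj_all r hrv, hrs, hqN⟩

end classification


lemma not_hasChair_of_max_deg_two {V : Type*} [Finite V] {H : SimpleGraph V}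
    (hdeg : ∀ v, Nat.card (H.neighborSet v) ≤ 2) : ¬ HasChair H := by
  rintro ⟨v0, v1, v2, v3, v4, h02, h04, h24, _, _, _, a0, a2, _, a4⟩
  have h3 : 2 < (H.neighborSet v1).ncard :=
    (Set.two_lt_ncard (Set.toFinite _)).mpr ⟨v0, a0, v2, a2, v4, a4, h02, h04, h24⟩
  have h4 := hdeg v1
  rw [Nat.card_coe_set_eq] at h4
  omega

lemma IsStarGraph.not_hasChair {V : Type*} {H : SimpleGraph V}
    (hs : H.IsStarGraph) : ¬ HasChair H := by
  rintro ⟨v0, v1, v2, v3, v4, h02, h04, h24, h30, h31, h34, a0, a2, a23, a4⟩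
  obtain ⟨c, -, hedge⟩ := hs
  by_cases h1c : v1 = c
  · subst h1c
    rcases hedge _ _ a23 with rfl | rfl
    · exact a2.ne rfl
    · exact h31 rfl
  · have e0 := (hedge _ _ a0).resolve_left h1c
    have e2 := (hedge _ _ a2).resolve_left h1c
    exact h02 (e0.trans e2.symm)

lemma reachable_induce {V : Type*} {G : SimpleGraph V} {s : Set V} {a b : V}
    (p : G.Walk a b) (hsup : ∀ x ∈ p.support, x ∈ s) (ha : a ∈ s) (hb : b ∈ s) :
    (G.induce s).Reachable ⟨a, ha⟩ ⟨b, hb⟩ := by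
  induction p with
  | nil => exact SimpleGraph.Reachable.refl _
  | @cons u w b h q ih =>
    have hw : w ∈ s := hsup w (by simp)
    refine (SimpleGraph.Adj.reachable (u := (⟨u, ha⟩ : s)) (v := ⟨w, hw⟩) h).trans
      (ih (fun x hx => hsup x ?_) hw hb)
    rw [SimpleGraph.Walk.support_cons]
    exact List.mem_cons_of_mem _ hx

lemma support_subset_supp {V : Type*} {G : SimpleGraph V} {u v : V}
    (p : G.Walk u v) {c : G.ConnectedComponent} (hu : u ∈ c.supp) :
    ∀ x ∈ p.support, x ∈ c.supp := by
  classical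
  intro x hx
  have hr : G.Reachable u x := ⟨p.takeUntil x hx⟩
  rw [SimpleGraph.ConnectedComponent.mem_supp_iff] at hu ⊢
  rw [← hu]
  exact SimpleGraph.ConnectedComponent.sound hr.symm


/-- `G` does not contain the chair as a topological minor iff every connected component of
`G` with at least five vertices is a path, a cycle, or a star. -/
theorem statement_15 {V : Type} [Fintype V] (G : SimpleGraph V) :
    ¬ chairGraph.IsTopMinor G ↔
      ∀ c : G.ConnectedComponent, 5 ≤ Nat.card c.supp →
        (G.induce c.supp).IsPathGraph ∨ (G.induce c.supp).IsCycleGraph ∨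
          (G.induce c.supp).IsStarGraph := by
  classical
  constructor
  · intro hntm c hcard
    have hne : Nonempty c.supp := (Nat.card_pos_iff.mp (by omega)).1
    have hconn : (G.induce c.supp).Connected := by
      rw [SimpleGraph.connected_iff]
      refine ⟨fun x y => ?_, hne⟩
      have hr : G.Reachable x.1 y.1 := SimpleGraph.ConnectedComponent.exact
        (((SimpleGraph.ConnectedComponent.mem_supp_iff _ _).mp x.2).trans
          ((SimpleGraph.ConnectedComponent.mem_supp_iff _ _).mp y.2).symm)
      obtain ⟨p⟩ := hr
      exact reachable_induce p (support_subset_supp p x.2) x.2 y.2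
    have hch : ¬ HasChair (G.induce c.supp) := by
      rintro ⟨v0, v1, v2, v3, v4, h02, h04, h24, h30, h31, h34, a0, a2, a23, a4⟩
      refine hntm (topMinor_of_hasChair ⟨v0.1, v1.1, v2.1, v3.1, v4.1,
        fun e => h02 (Subtype.ext e), fun e => h04 (Subtype.ext e),
        fun e => h24 (Subtype.ext e), fun e => h30 (Subtype.ext e),
        fun e => h31 (Subtype.ext e), fun e => h34 (Subtype.ext e),
        a0, a2, a23, a4⟩)
    exact classification hconn hcard hch
  · intro hcl htm
    obtain ⟨v0, v1, v2, v3, v4, h02, h04, h24, h30, h31, h34, a0, a2, a23, a4⟩ :=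
      hasChair_of_topMinor htm
    set c := G.connectedComponentMk v1 with hc
    have m1 : v1 ∈ c.supp := (SimpleGraph.ConnectedComponent.mem_supp_iff _ _).mpr rfl
    have m0 : v0 ∈ c.supp := (SimpleGraph.ConnectedComponent.mem_supp_iff _ _).mpr
      (SimpleGraph.ConnectedComponent.connectedComponentMk_eq_of_adj a0.symm)
    have m2 : v2 ∈ c.supp := (SimpleGraph.ConnectedComponent.mem_supp_iff _ _).mpr
      (SimpleGraph.ConnectedComponent.connectedComponentMk_eq_of_adj a2.symm)
    have m3 : v3 ∈ c.supp := (SimpleGraph.ConnectedComponent.mem_supp_iff _ _).mpr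
      ((SimpleGraph.ConnectedComponent.connectedComponentMk_eq_of_adj a23.symm).trans
        (SimpleGraph.ConnectedComponent.connectedComponentMk_eq_of_adj a2.symm))
    have m4 : v4 ∈ c.supp := (SimpleGraph.ConnectedComponent.mem_supp_iff _ _).mpr
      (SimpleGraph.ConnectedComponent.connectedComponentMk_eq_of_adj a4.symm)
    have hcard : 5 ≤ Nat.card c.supp := by
      rw [Nat.card_coe_set_eq]
      have hsub : ({v0, v1, v2, v3, v4} : Set V) ⊆ c.supp := by
        rintro z (rfl | rfl | rfl | rfl | rfl) <;> assumption
      have h5 : ({v0, v1, v2, v3, v4} : Set V).ncard = 5 := by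
        rw [Set.ncard_insert_of_notMem (by
            simp only [Set.mem_insert_iff, Set.mem_singleton_iff]
            push_neg
            exact ⟨a0.ne', h02, Ne.symm h30, h04⟩),
          Set.ncard_insert_of_notMem (by
            simp only [Set.mem_insert_iff, Set.mem_singleton_iff]
            push_neg
            exact ⟨a2.ne, Ne.symm h31, a4.ne⟩),
          Set.ncard_insert_of_notMem (by
            simp only [Set.mem_insert_iff, Set.mem_singleton_iff]
            push_neg
            exact ⟨a23.ne, h24⟩),
          Set.ncard_insert_of_notMem (by
            simp only [Set.mem_singleton_iff]
            exact h34),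
          Set.ncard_singleton]
      exact h5 ▸ Set.ncard_le_ncard hsub (Set.toFinite _)
    have hchair : HasChair (G.induce c.supp) :=
      ⟨⟨v0, m0⟩, ⟨v1, m1⟩, ⟨v2, m2⟩, ⟨v3, m3⟩, ⟨v4, m4⟩,
        fun e => h02 (congrArg Subtype.val e), fun e => h04 (congrArg Subtype.val e),
        fun e => h24 (congrArg Subtype.val e), fun e => h30 (congrArg Subtype.val e),
        fun e => h31 (congrArg Subtype.val e), fun e => h34 (congrArg Subtype.val e),
        a0, a2, a23, a4⟩
    rcases hcl c hcard with hpath | hcyc | hstar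
    · exact not_hasChair_of_max_deg_two hpath.2 hchair
    · exact not_hasChair_of_max_deg_two (fun v => (hcyc.2 v).le) hchair
    · exact IsStarGraph.not_hasChair hstar hchair
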